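/- Let B_M(u, v) = u₀v₀ − u₁v₁ − u₂v₂ − u₃v₃ be the Minkowski bilinear form on ℝ⁴. Let h : {x ∈ ℝ³ : ‖x‖ < 1} → ℝ⁴ be defined by h(x) = ((1 + ‖x‖²)·γ₀ + 2·ĵ(x))/(1 − ‖x‖²), where γ₀ is the first standard basis vector of ℝ⁴ and ĵ : ℝ³ → ℝ⁴ embeds onto the last three coordinates. Then h is differentiable at every x with ‖x‖ < 1, and for all such x and all v ∈ ℝ³, B_M((fderiv h x) v, (fderiv h x) v) = −4‖v‖²/(1 − ‖x‖²)²; that is, the induced metric on the hyperboloid L³ pulls back to the hyperbolic metric −4 dx²/(1 − ‖x‖²)² on the open unit ball. -/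

import Mathlib

/-- The Minkowski bilinear form on `Fin 4 → ℝ`. -/
def BM (u v : Fin 4 → ℝ) : ℝ := u 0 * v 0 - u 1 * v 1 - u 2 * v 2 - u 3 * v 3

/-- The embedding of ℝ³ onto the last three coordinates of `Fin 4 → ℝ`. -/
noncomputable def jEmb4 (x : EuclideanSpace ℝ (Fin 3)) : Fin 4 → ℝ :=
  Fin.cons 0 (WithLp.equiv 2 (Fin 3 → ℝ) x)

noncomputable def jL : EuclideanSpace ℝ (Fin 3) →L[ℝ] (Fin 4 → ℝ) :=
  LinearMap.toContinuousLinearMap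
  { toFun := jEmb4
    map_add' := by
      intro x y; unfold jEmb4
      ext i; refine Fin.cases ?_ (fun j => ?_) i <;> simp
    map_smul' := by
      intro c x; unfold jEmb4
      ext i; refine Fin.cases ?_ (fun j => ?_) i <;> simp }

lemma jL_apply (x : EuclideanSpace ℝ (Fin 3)) : jL x = jEmb4 x := rfl

set_option maxHeartbeats 2000000 in
/-- The parametrization `h x = ((1 + ‖x‖²) γ₀ + 2 ĵ(x))/(1 − ‖x‖²)` of the hyperboloid L³
over the open unit ball of ℝ³ is differentiable at every `x` with `‖x‖ < 1`, and
`B_M((fderiv h x) v, (fderiv h x) v) = −4‖v‖²/(1 − ‖x‖²)²`: the induced metric pulls back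
to the hyperbolic metric `−4 dx²/(1 − ‖x‖²)²`. -/
theorem stereographic_hyperbolic_metric
    (γ₀ : Fin 4 → ℝ) (hγ₀ : γ₀ = Pi.single 0 1)
    (h : EuclideanSpace ℝ (Fin 3) → (Fin 4 → ℝ))
    (hh : ∀ x, h x = (1 - ‖x‖ ^ 2)⁻¹ • ((1 + ‖x‖ ^ 2) • γ₀ + (2 : ℝ) • jEmb4 x)) :
    ∀ x : EuclideanSpace ℝ (Fin 3), ‖x‖ < 1 → DifferentiableAt ℝ h x ∧
      ∀ v : EuclideanSpace ℝ (Fin 3),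
        BM (fderiv ℝ h x v) (fderiv ℝ h x v) = -4 * ‖v‖ ^ 2 / (1 - ‖x‖ ^ 2) ^ 2 := by
  intro x hx
  have hxsq : ‖x‖ ^ 2 < 1 := by nlinarith [norm_nonneg x]
  have ha : (1 : ℝ) - ‖x‖ ^ 2 ≠ 0 := by intro h0; rw [sub_eq_zero] at h0; linarith
  have hn : HasFDerivAt (fun y : EuclideanSpace ℝ (Fin 3) => ‖y‖ ^ 2)
      ((2 : ℕ) • innerSL ℝ x) x := by
    simpa using (hasFDerivAt_id x).norm_sq
  have hg : HasFDerivAt (fun y : EuclideanSpace ℝ (Fin 3) => 1 - ‖y‖ ^ 2)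
      (-((2 : ℕ) • innerSL ℝ x)) x := by
    exact ((hasFDerivAt_const (1 : ℝ) x).sub hn).congr_fderiv (zero_sub _)
  have hginv : HasFDerivAt (fun y : EuclideanSpace ℝ (Fin 3) => (1 - ‖y‖ ^ 2)⁻¹)
      ((-(((1 - ‖x‖ ^ 2) ^ 2)⁻¹)) • (-((2 : ℕ) • innerSL ℝ x))) x :=
    (hasDerivAt_inv ha).comp_hasFDerivAt x hg
  have h1 : HasFDerivAt (fun y : EuclideanSpace ℝ (Fin 3) => (1 + ‖y‖ ^ 2) • γ₀)
      (((2 : ℕ) • innerSL ℝ x).smulRight γ₀) x := by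
    simpa using ((hasFDerivAt_const (1 : ℝ) x).add hn).smul_const γ₀
  have h2 : HasFDerivAt (fun y : EuclideanSpace ℝ (Fin 3) => (2 : ℝ) • jEmb4 y)
      ((2 : ℝ) • (jL : EuclideanSpace ℝ (Fin 3) →L[ℝ] (Fin 4 → ℝ))) x := by
    simpa [jL_apply] using jL.hasFDerivAt.const_smul (2 : ℝ)
  have hF := h1.add h2
  have hH : HasFDerivAt h
      ((1 - ‖x‖ ^ 2)⁻¹ • (((2 : ℕ) • innerSL ℝ x).smulRight γ₀ + (2 : ℝ) • jL) +
        ((-(((1 - ‖x‖ ^ 2) ^ 2)⁻¹)) • (-((2 : ℕ) • innerSL ℝ x))).smulRight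
          ((1 + ‖x‖ ^ 2) • γ₀ + (2 : ℝ) • jEmb4 x)) x := by
    rw [show h = fun y => (1 - ‖y‖ ^ 2)⁻¹ • ((1 + ‖y‖ ^ 2) • γ₀ + (2 : ℝ) • jEmb4 y) from
      funext hh]
    exact hginv.smul hF
  refine ⟨hH.differentiableAt, fun v => ?_⟩
  rw [hH.fderiv]
  have hxe : ‖x‖ ^ 2 = x 0 ^ 2 + x 1 ^ 2 + x 2 ^ 2 := by
    rw [← real_inner_self_eq_norm_sq]
    simp only [PiLp.inner_apply, RCLike.inner_apply, Fin.sum_univ_three, conj_trivial]; ring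
  have hve : ‖v‖ ^ 2 = v 0 ^ 2 + v 1 ^ 2 + v 2 ^ 2 := by
    rw [← real_inner_self_eq_norm_sq]
    simp only [PiLp.inner_apply, RCLike.inner_apply, Fin.sum_univ_three, conj_trivial]; ring
  have hip : (inner ℝ x v : ℝ) = x 0 * v 0 + x 1 * v 1 + x 2 * v 2 := by
    simp [PiLp.inner_apply, RCLike.inner_apply, Fin.sum_univ_three]; ring
  have e0 : ∀ y : EuclideanSpace ℝ (Fin 3), jEmb4 y 0 = 0 := fun _ => rfl
  have e1 : ∀ y : EuclideanSpace ℝ (Fin 3), jEmb4 y 1 = y 0 := fun _ => rfl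
  have e2 : ∀ y : EuclideanSpace ℝ (Fin 3), jEmb4 y 2 = y 1 := fun _ => rfl
  have e3 : ∀ y : EuclideanSpace ℝ (Fin 3), jEmb4 y 3 = y 2 := fun _ => rfl
  have g0 : γ₀ 0 = 1 := by simp [hγ₀]
  have g1 : γ₀ 1 = 0 := by rw [hγ₀]; exact Pi.single_eq_of_ne (by decide) 1
  have g2 : γ₀ 2 = 0 := by rw [hγ₀]; exact Pi.single_eq_of_ne (by decide) 1
  have g3 : γ₀ 3 = 0 := by rw [hγ₀]; exact Pi.single_eq_of_ne (by decide) 1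
  have ha' : (1 : ℝ) - (x 0 ^ 2 + x 1 ^ 2 + x 2 ^ 2) ≠ 0 := hxe ▸ ha
  simp only [BM, ContinuousLinearMap.add_apply, ContinuousLinearMap.coe_smul',
    Pi.smul_apply, ContinuousLinearMap.smulRight_apply, innerSL_apply_apply, jL_apply,
    ContinuousLinearMap.neg_apply, ContinuousLinearMap.smul_apply, smul_eq_mul,
    Pi.add_apply, smul_eq_mul, e0, e1, e2, e3, g0, g1, g2, g3, hip, hxe, hve,
    PiLp.inner_apply, RCLike.inner_apply, conj_trivial, Fin.sum_univ_three,
    nsmul_eq_mul, Nat.cast_ofNat, mul_zero, mul_one, add_zero, zero_add]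

  field_simp
  ring
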